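/- arXiv:1903.07872 — 3 statements merged into one kernel-verified Lean document; each statement's English description precedes it below -/
import Mathlib

section
/- Let α ∈ (0, 2-√2), γ ∈ (0, (α²-4α+2)/2], and define A := (2γ - (α²-4α+2))/(2-α)², ν₁ := (α²-10α+13)γ²/(3(1-α)²(2-α)²), B := |1/3 - ν₁| - (2γ+1)/(2-α)², and F(x) := (1-α)(3-α)/(2-α)² + A x² + B x⁴. Then for all x ∈ [0,1], F(x) ≤ (1-α)(3-α)/(2-α)². -/
set_option maxHeartbeats 1000000 in
theorem stmt_12 (α γ : ℝ) (h1 : 0 < α) (h2 : α < 2 - Real.sqrt 2)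
    (h3 : 0 < γ) (h4 : γ ≤ (α ^ 2 - 4 * α + 2) / 2)
    (A ν₁ B : ℝ) (hA : A = (2 * γ - (α ^ 2 - 4 * α + 2)) / (2 - α) ^ 2)
    (hν : ν₁ = (α ^ 2 - 10 * α + 13) * γ ^ 2 / (3 * (1 - α) ^ 2 * (2 - α) ^ 2))
    (hB : B = |1 / 3 - ν₁| - (2 * γ + 1) / (2 - α) ^ 2)
    (x : ℝ) (hx0 : 0 ≤ x) (hx1 : x ≤ 1) :
    (1 - α) * (3 - α) / (2 - α) ^ 2 + A * x ^ 2 + B * x ^ 4 ≤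
      (1 - α) * (3 - α) / (2 - α) ^ 2 := by
  have s2 : Real.sqrt 2 ^ 2 = 2 := Real.sq_sqrt (by norm_num)
  have hs1 : 1 < Real.sqrt 2 := by nlinarith [Real.sqrt_nonneg 2]
  have hα1 : α < 1 := by linarith
  have hq : 0 < α ^ 2 - 4 * α + 2 := by
    nlinarith [Real.sqrt_nonneg 2, sq_nonneg (2 - α - Real.sqrt 2)]
  have hd : (0:ℝ) < (2 - α) ^ 2 := by nlinarith
  have hD : (0:ℝ) < 3 * (1 - α) ^ 2 * (2 - α) ^ 2 := by nlinarith [sq_nonneg (1 - α)]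
  -- A ≤ 0
  have hA0 : A ≤ 0 := by
    rw [hA]
    apply div_nonpos_of_nonpos_of_nonneg (by linarith) (le_of_lt hd)
  -- ν₁ ≥ 0
  have hν0 : 0 ≤ ν₁ := by
    rw [hν]
    apply div_nonneg _ (le_of_lt hD)
    apply mul_nonneg _ (sq_nonneg γ)
    nlinarith
  -- |1/3 - ν₁| ≤ (α²-4α+3)/(2-α)²
  have habs : |1 / 3 - ν₁| ≤ (α ^ 2 - 4 * α + 3) / (2 - α) ^ 2 := by
    rw [abs_le]
    constructor
    · -- ν₁ ≤ 1/3 + (α²-4α+3)/(2-α)²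
      rw [neg_le, neg_sub]
      have hub : ν₁ ≤ 1 / 3 + (α ^ 2 - 4 * α + 3) / (2 - α) ^ 2 := by
        rw [hν, div_le_iff₀ hD]
        have hg2 : 4 * γ ^ 2 ≤ (α ^ 2 - 4 * α + 2) ^ 2 := by nlinarith
        have hC : 0 < -α ^ 3 + 14 * α ^ 2 - 39 * α + 40 := by nlinarith
        have hN : 0 < α ^ 2 - 10 * α + 13 := by nlinarith
        have hid : 4 * (1 - α) ^ 2 * (2 - α) ^ 2 + 12 * (1 - α) ^ 3 * (3 - α)
            - (α ^ 2 - 10 * α + 13) * (α ^ 2 - 4 * α + 2) ^ 2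
            = α * (α ^ 2 - 4 * α + 2) * (-α ^ 3 + 14 * α ^ 2 - 39 * α + 40)
              + 10 * α ^ 2 := by ring
        have key : (α ^ 2 - 10 * α + 13) * (α ^ 2 - 4 * α + 2) ^ 2
            ≤ 4 * (1 - α) ^ 2 * (2 - α) ^ 2 + 12 * (1 - α) ^ 3 * (3 - α) := by
          have hp := mul_pos (mul_pos h1 hq) hC
          linarith [sq_nonneg α, hid]
        have h4g : (α ^ 2 - 10 * α + 13) * (4 * γ ^ 2)
            ≤ (α ^ 2 - 10 * α + 13) * (α ^ 2 - 4 * α + 2) ^ 2 :=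
          mul_le_mul_of_nonneg_left hg2 (le_of_lt hN)
        have heq : (1 / 3 + (α ^ 2 - 4 * α + 3) / (2 - α) ^ 2) * (3 * (1 - α) ^ 2 * (2 - α) ^ 2)
            = (1 - α) ^ 2 * (2 - α) ^ 2 + 3 * (1 - α) ^ 2 * (α ^ 2 - 4 * α + 3) := by
          have h2a : (2:ℝ) - α ≠ 0 := by linarith
          field_simp
        rw [heq]
        linarith [h4g, key]
      linarith
    · -- 1/3 - ν₁ ≤ (α²-4α+3)/(2-α)²
      have h13 : (1:ℝ) / 3 ≤ (α ^ 2 - 4 * α + 3) / (2 - α) ^ 2 := by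
        rw [le_div_iff₀ hd]
        nlinarith [hq]
      linarith
  -- A + B ≤ 0
  have hAB : A + B ≤ 0 := by
    have hsum : (2 * γ - (α ^ 2 - 4 * α + 2)) / (2 - α) ^ 2
        + (α ^ 2 - 4 * α + 3) / (2 - α) ^ 2 - (2 * γ + 1) / (2 - α) ^ 2 = 0 := by
      field_simp
      ring
    rw [hA, hB]
    linarith
  -- conclude
  have hx2 : x ^ 2 ≤ 1 := by nlinarith
  have hx4 : x ^ 4 ≤ x ^ 2 := by
    nlinarith [mul_le_mul_of_nonneg_left hx2 (sq_nonneg x)]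
  have h2' : A * x ^ 2 ≤ A * x ^ 4 := by
    nlinarith [mul_nonneg (neg_nonneg.2 hA0) (sub_nonneg.2 hx4)]
  have h3' : (A + B) * x ^ 4 ≤ 0 :=
    mul_nonpos_of_nonpos_of_nonneg hAB (by positivity)
  nlinarith [h2', h3']
end

section
/- Let α ∈ (0, 2-√2), γ ∈ (0, (α²-4α+2)/2] be real, μ₁ := 2γ/(2-α)², ν₁ := (α²-10α+13)γ²/(3(1-α)²(2-α)²), K := (1-α)(3-α)/(2-α)². Then for all real c₁ ∈ [0,1] and complex c₂ with |c₂| ≤ 1 - c₁², the quantity c₁(1-c₁²) + (K - c₁/(1+c₁))|c₂|² + μ₁ c₁²|c₂| + |1/3 - ν₁| c₁⁴ is at most K. -/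
set_option maxHeartbeats 800000 in
private lemma aux_nu_13 (α γ : ℝ) (h1 : 0 < α) (hα1 : α < 1) (h3 : 0 < γ)
    (hγq : 2 * γ ≤ α ^ 2 - 4 * α + 2) (hq : 0 < α ^ 2 - 4 * α + 2)
    (hN : 0 < α ^ 2 - 10 * α + 13) :
    (α ^ 2 - 10 * α + 13) * γ ^ 2 ≤ 3 * (1 - α) ^ 3 * (3 - α) + (1 - α) ^ 2 * (2 - α) ^ 2 := by
  have h4γ : 4 * γ ^ 2 ≤ (α ^ 2 - 4 * α + 2) ^ 2 := by nlinarith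
  have hcub : 0 ≤ 40 - 39 * α + 14 * α ^ 2 - α ^ 3 := by
    nlinarith [mul_nonneg (sq_nonneg α) (show (0:ℝ) ≤ 14 - α by linarith)]
  have hP : 0 ≤ 80 * α - 228 * α ^ 2 + 224 * α ^ 3 - 97 * α ^ 4 + 18 * α ^ 5 - α ^ 6 := by
    nlinarith [mul_nonneg (mul_nonneg h1.le hq.le) hcub, sq_nonneg α]
  nlinarith [mul_le_mul_of_nonneg_left h4γ hN.le]

set_option maxHeartbeats 1000000 in
private lemma aux_main_13 (μ₁ L K c₁ t : ℝ) (hμ0 : 0 < μ₁) (hμK : μ₁ ≤ 2 * K - 1)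
    (h2K : 0 < 2 * K - 1) (hL0 : 0 ≤ L) (hLK : L ≤ K)
    (hc0 : 0 ≤ c₁) (hc1 : c₁ ≤ 1) (ht0 : 0 ≤ t) (ht : t ≤ 1 - c₁ ^ 2) :
    c₁ * (1 - c₁ ^ 2) + (K - c₁ / (1 + c₁)) * t ^ 2 +
        μ₁ * c₁ ^ 2 * t + L * c₁ ^ 4 ≤ K := by
  have h1c : (0:ℝ) < 1 + c₁ := by linarith
  have hd : c₁ / (1 + c₁) ≤ 1 / 2 := by
    rw [div_le_iff₀ h1c]; linarith
  have hA : 0 ≤ K - c₁ / (1 + c₁) := by linarith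
  have hu : 0 ≤ 1 - c₁ ^ 2 := by nlinarith
  have s1 : (K - c₁ / (1 + c₁)) * t ^ 2 ≤ (K - c₁ / (1 + c₁)) * ((1 - c₁ ^ 2) * t) := by
    apply mul_le_mul_of_nonneg_left _ hA
    nlinarith
  have s2 : ((K - c₁ / (1 + c₁)) * (1 - c₁ ^ 2) + μ₁ * c₁ ^ 2) * t
      ≤ ((K - c₁ / (1 + c₁)) * (1 - c₁ ^ 2) + μ₁ * c₁ ^ 2) * (1 - c₁ ^ 2) := by
    apply mul_le_mul_of_nonneg_left ht
    have h5 : 0 ≤ (K - c₁ / (1 + c₁)) * (1 - c₁ ^ 2) := mul_nonneg hA hu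
    nlinarith [sq_nonneg c₁]
  have hid2 : (K - c₁ / (1 + c₁)) * (1 - c₁ ^ 2) ^ 2
      = K * (1 - c₁ ^ 2) ^ 2 - c₁ * (1 - c₁) * (1 - c₁ ^ 2) := by
    field_simp
    ring
  have hH : c₁ * (1 - c₁ ^ 2) + (K - c₁ / (1 + c₁)) * (1 - c₁ ^ 2) ^ 2
      + μ₁ * c₁ ^ 2 * (1 - c₁ ^ 2) + L * c₁ ^ 4 ≤ K := by
    rw [hid2]
    have t1 : 0 ≤ c₁ ^ 2 * (1 - c₁ ^ 2) * (2 * K - 1 - μ₁) :=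
      mul_nonneg (mul_nonneg (sq_nonneg c₁) hu) (by linarith)
    have t2 : 0 ≤ c₁ ^ 4 * (K - L) :=
      mul_nonneg (by positivity) (by linarith)
    nlinarith [t1, t2]
  nlinarith [s1, s2, hH]

theorem stmt_13 (α γ : ℝ) (h1 : 0 < α) (h2 : α < 2 - Real.sqrt 2)
    (h3 : 0 < γ) (h4 : γ ≤ (α ^ 2 - 4 * α + 2) / 2)
    (μ₁ ν₁ K : ℝ) (hμ : μ₁ = 2 * γ / (2 - α) ^ 2)
    (hν : ν₁ = (α ^ 2 - 10 * α + 13) * γ ^ 2 / (3 * (1 - α) ^ 2 * (2 - α) ^ 2))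
    (hK : K = (1 - α) * (3 - α) / (2 - α) ^ 2)
    (c₁ : ℝ) (hc0 : 0 ≤ c₁) (hc1 : c₁ ≤ 1)
    (c₂ : ℂ) (hc2 : ‖c₂‖ ≤ 1 - c₁ ^ 2) :
    c₁ * (1 - c₁ ^ 2) + (K - c₁ / (1 + c₁)) * ‖c₂‖ ^ 2 +
        μ₁ * c₁ ^ 2 * ‖c₂‖ + |1 / 3 - ν₁| * c₁ ^ 4 ≤ K := by
  have ht0 : 0 ≤ ‖c₂‖ := norm_nonneg c₂
  have hs2 : Real.sqrt 2 ^ 2 = 2 := Real.sq_sqrt (by norm_num)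
  have hs1 : 1 < Real.sqrt 2 := by nlinarith [Real.sqrt_nonneg 2]
  have hα1 : α < 1 := by linarith
  have hq : 0 < α ^ 2 - 4 * α + 2 := by linarith
  have h2α : (0:ℝ) < 2 - α := by linarith
  have h2a : (0:ℝ) < (2 - α) ^ 2 := by positivity
  have h1a : (0:ℝ) < 1 - α := by linarith
  have hN : 0 < α ^ 2 - 10 * α + 13 := by nlinarith [sq_nonneg α]
  have hμ0 : 0 < μ₁ := by rw [hμ]; positivity
  have hK2 : 2 * K - 1 = (α ^ 2 - 4 * α + 2) / (2 - α) ^ 2 := by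
    rw [hK]; field_simp; ring
  have hμK : μ₁ ≤ 2 * K - 1 := by
    rw [hμ, hK2]
    gcongr
    linarith
  have h2K : 0 < 2 * K - 1 := by
    rw [hK2]; exact div_pos hq h2a
  have hν0 : 0 ≤ ν₁ := by
    rw [hν]; exact div_nonneg (mul_nonneg hN.le (sq_nonneg γ)) (by positivity)
  have hden : (0:ℝ) < 3 * (1 - α) ^ 2 * (2 - α) ^ 2 := by positivity
  have hνK : ν₁ ≤ K + 1 / 3 := by
    rw [hν, div_le_iff₀ hden, hK]
    have hexp : ((1 - α) * (3 - α) / (2 - α) ^ 2 + 1 / 3) * (3 * (1 - α) ^ 2 * (2 - α) ^ 2)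
        = 3 * (1 - α) ^ 3 * (3 - α) + (1 - α) ^ 2 * (2 - α) ^ 2 := by
      field_simp
    rw [hexp]
    exact aux_nu_13 α γ h1 hα1 h3 (by linarith) hq hN
  have habs : |1 / 3 - ν₁| ≤ K := abs_le.mpr ⟨by linarith, by linarith⟩
  exact aux_main_13 μ₁ _ K c₁ _ hμ0 hμK h2K (abs_nonneg _) habs hc0 hc1 ht0 hc2
end

section
/- Let ω be analytic on the unit disk with ω(0) = 0 and |ω(z)| < 1 for all z in the disk, and write ω(z) = c₁z + c₂z² + c₃z³ + ⋯. If c₁ is real and 0 ≤ c₁ ≤ 1, then |c₃| ≤ 1 - c₁² - |c₂|²/(1 + c₁). -/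
open Metric Set Complex


lemma deriv_id_mul {u : ℂ → ℂ} {z : ℂ} (hu : DifferentiableAt ℂ u z) :
    deriv (fun w => w * u w) z = u z + z * deriv u z := by
  rw [deriv_fun_mul differentiableAt_fun_id hu, deriv_id'']
  ring

lemma key_iterated {F G : ℂ → ℂ} (hG : AnalyticOnNhd ℂ G (ball 0 1))
    (hFG : ∀ z, F z = z * G z) :
    iteratedDeriv 2 F 0 = 2 * deriv G 0 ∧ iteratedDeriv 3 F 0 = 3 * iteratedDeriv 2 G 0 := by
  have h0mem : (0:ℂ) ∈ ball (0:ℂ) 1 := mem_ball_self one_pos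
  have hG' : AnalyticOnNhd ℂ (deriv G) (ball 0 1) := hG.deriv
  have hG'' : AnalyticOnNhd ℂ (deriv (deriv G)) (ball 0 1) := hG'.deriv
  have hFeq : F = fun z => z * G z := funext hFG
  have step1 : ∀ z ∈ ball (0:ℂ) 1, deriv F z = G z + z * deriv G z := by
    intro z hz
    rw [hFeq, deriv_id_mul ((hG z hz).differentiableAt)]
  have hev1 : deriv F =ᶠ[nhds (0:ℂ)] (fun z => G z + z * deriv G z) := by
    filter_upwards [isOpen_ball.mem_nhds h0mem] with x hx using step1 x hx
  have step2 : ∀ z ∈ ball (0:ℂ) 1,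
      deriv (fun w => G w + w * deriv G w) z = 2 * deriv G z + z * deriv (deriv G) z := by
    intro z hz
    rw [deriv_fun_add ((hG z hz).differentiableAt)
      (differentiableAt_fun_id.fun_mul ((hG' z hz).differentiableAt)),
      deriv_id_mul ((hG' z hz).differentiableAt)]
    ring
  have hd2 : deriv (deriv F) 0 = 2 * deriv G 0 := by
    rw [hev1.deriv_eq, step2 0 h0mem]
    ring
  constructor
  · rw [iteratedDeriv_succ, iteratedDeriv_one, hd2]
  · have hev2 : deriv (deriv F) =ᶠ[nhds (0:ℂ)] (fun z => 2 * deriv G z + z * deriv (deriv G) z) := by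
      filter_upwards [isOpen_ball.mem_nhds h0mem] with x hx
      have hev1x : deriv F =ᶠ[nhds x] (fun z => G z + z * deriv G z) := by
        filter_upwards [isOpen_ball.mem_nhds hx] with y hy using step1 y hy
      rw [hev1x.deriv_eq, step2 x hx]
    have : deriv (deriv (deriv F)) 0 = 3 * deriv (deriv G) 0 := by
      rw [hev2.deriv_eq,
        deriv_fun_add ((differentiableAt_const (2:ℂ)).fun_mul ((hG' 0 h0mem).differentiableAt))
          (differentiableAt_fun_id.fun_mul ((hG'' 0 h0mem).differentiableAt)),
        deriv_const_mul _ ((hG' 0 h0mem).differentiableAt),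
        deriv_id_mul ((hG'' 0 h0mem).differentiableAt)]
      ring
    rw [show (3:ℕ) = 2 + 1 from rfl, iteratedDeriv_succ, iteratedDeriv_succ, iteratedDeriv_one,
      iteratedDeriv_succ, iteratedDeriv_one, this]

lemma mobius_lt (b w : ℂ) (hb : ‖b‖ < 1) (hw : ‖w‖ < 1) :
    ‖(w - b) / (1 - (starRingEnd ℂ) b * w)‖ < 1 := by
  have hb2 : b.re^2 + b.im^2 < 1 := by
    have h := Complex.sq_norm b
    rw [Complex.normSq_apply] at h
    nlinarith [norm_nonneg b]
  have hw2 : w.re^2 + w.im^2 < 1 := by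
    have h := Complex.sq_norm w
    rw [Complex.normSq_apply] at h
    nlinarith [norm_nonneg w]
  have hden : ‖1 - (starRingEnd ℂ) b * w‖ > 0 := by
    have h1 : ‖(starRingEnd ℂ) b * w‖ < 1 := by
      rw [norm_mul, Complex.norm_conj]
      nlinarith [norm_nonneg b, norm_nonneg w]
    have : (1 : ℂ) - (starRingEnd ℂ) b * w ≠ 0 := by
      intro h
      rw [sub_eq_zero] at h
      rw [← h] at h1; simp at h1
    exact norm_pos_iff.mpr this
  rw [norm_div, div_lt_one hden]
  have : (‖w - b‖)^2 < (‖1 - (starRingEnd ℂ) b * w‖)^2 := by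
    rw [Complex.sq_norm, Complex.sq_norm]
    simp only [Complex.normSq_apply, Complex.sub_re, Complex.sub_im, Complex.one_re, Complex.one_im,
      Complex.mul_re, Complex.mul_im, Complex.conj_re, Complex.conj_im]
    nlinarith [hb2, hw2, sq_nonneg (b.re*w.re + b.im*w.im)]
  nlinarith [norm_nonneg (w - b), hden]


lemma strict_lt_one {φ : ℂ → ℂ} (hd : DifferentiableOn ℂ φ (ball 0 1))
    (hle : ∀ z ∈ ball (0:ℂ) 1, ‖φ z‖ ≤ 1) (h0 : ‖φ 0‖ < 1) :
    ∀ z ∈ ball (0:ℂ) 1, ‖φ z‖ < 1 := by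
  intro z hz
  rcases lt_or_ge (‖φ z‖) 1 with h | h
  · exact h
  exfalso
  have heq : ‖φ z‖ = 1 := le_antisymm (hle z hz) h
  have hmax : IsMaxOn (norm ∘ φ) (ball 0 1) z := by
    intro w hw
    simp only [Function.comp_apply, Set.mem_setOf_eq]
    exact (hle w hw).trans heq.ge
  have hEq := Complex.eqOn_of_isPreconnected_of_isMaxOn_norm
    (convex_ball (0:ℂ) 1).isPreconnected isOpen_ball hd hz hmax
    (mem_ball_self one_pos)
  have : φ 0 = φ z := hEq
  rw [this, heq] at h0
  exact lt_irrefl _ h0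

/-- Schwarz–Pick at the origin. -/
lemma schwarz_pick_zero {φ : ℂ → ℂ} (hd : DifferentiableOn ℂ φ (ball 0 1))
    (hle : ∀ z ∈ ball (0:ℂ) 1, ‖φ z‖ ≤ 1) :
    ‖deriv φ 0‖ ≤ 1 - ‖φ 0‖ ^ 2 := by
  have h0mem : (0:ℂ) ∈ ball (0:ℂ) 1 := mem_ball_self one_pos
  rcases eq_or_lt_of_le (hle 0 h0mem) with h1 | h1
  · -- |φ 0| = 1 : φ constant
    have hmax : IsMaxOn (norm ∘ φ) (ball 0 1) 0 := by
      intro w hw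
      simp only [Function.comp_apply, Set.mem_setOf_eq]
      rw [h1]; exact hle w hw
    have hEq := Complex.eqOn_of_isPreconnected_of_isMaxOn_norm
      (convex_ball (0:ℂ) 1).isPreconnected isOpen_ball hd h0mem hmax
    have hev : φ =ᶠ[nhds 0] (fun _ => φ 0) := by
      filter_upwards [isOpen_ball.mem_nhds h0mem] with x hx
      exact hEq hx
    rw [hev.deriv_eq, deriv_const]
    simp [h1]
  · -- |φ 0| < 1
    set b := φ 0 with hb
    have hstrict := strict_lt_one hd hle h1
    set m : ℂ → ℂ := fun z => (φ z - b) / (1 - (starRingEnd ℂ) b * φ z) with hm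
    have hdenne : ∀ z ∈ ball (0:ℂ) 1, (1 : ℂ) - (starRingEnd ℂ) b * φ z ≠ 0 := by
      intro z hz h
      rw [sub_eq_zero] at h
      have : ‖(starRingEnd ℂ) b * φ z‖ < 1 := by
        rw [norm_mul, Complex.norm_conj]
        nlinarith [norm_nonneg b, norm_nonneg (φ z), hstrict z hz]
      rw [← h] at this; simp at this
    have hmd : DifferentiableOn ℂ m (ball 0 1) := by
      apply DifferentiableOn.div
      · exact hd.sub (differentiableOn_const b)
      · exact (differentiableOn_const 1).sub ((differentiableOn_const _).mul hd)
      · exact hdenne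
    have hm0 : m 0 = 0 := by simp [hm, hb]
    have hmaps : MapsTo m (ball 0 1) (ball (m 0) 1) := by
      intro z hz
      rw [hm0, mem_ball_zero_iff]
      exact mobius_lt b (φ z) h1 (hstrict z hz)
    have hSch := Complex.norm_dslope_le_div_of_mapsTo_ball hmd (hmaps.mono_right ball_subset_closedBall) h0mem
    rw [dslope_same, div_one] at hSch
    -- compute deriv m 0
    have hφd0 : DifferentiableAt ℂ φ 0 := hd.differentiableAt (isOpen_ball.mem_nhds h0mem)
    have hden0 : (1:ℂ) - (starRingEnd ℂ) b * φ 0 ≠ 0 := hdenne 0 h0mem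
    have hderiv : deriv m 0 = deriv φ 0 / (1 - (starRingEnd ℂ) b * b) := by
      rw [hm]
      rw [deriv_fun_div (hφd0.sub_const b)
        ((differentiableAt_const (1:ℂ)).fun_sub ((differentiableAt_const _).fun_mul hφd0)) hden0]
      rw [deriv_fun_sub hφd0 (differentiableAt_const b),
        deriv_fun_sub (differentiableAt_const (1:ℂ)) ((differentiableAt_const _).fun_mul hφd0),
        deriv_const_mul _ hφd0]
      simp only [deriv_const, ← hb]
      field_simp [show (1:ℂ) - (starRingEnd ℂ) b * b ≠ 0 from hden0]
      ring
    rw [hderiv] at hSch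
    have hbb : (starRingEnd ℂ) b * b = ((‖b‖ ^ 2 : ℝ) : ℂ) := by
      rw [← Complex.normSq_eq_norm_sq, ← Complex.normSq_eq_conj_mul_self]
    rw [hbb] at hSch
    have habs : ‖(1:ℂ) - ((‖b‖ ^ 2 : ℝ) : ℂ)‖ = 1 - ‖b‖ ^ 2 := by
      rw [show (1:ℂ) - ((‖b‖ ^ 2 : ℝ) : ℂ) = (((1 - ‖b‖ ^ 2 : ℝ)) : ℂ) by push_cast; ring]
      rw [Complex.norm_real, Real.norm_eq_abs, _root_.abs_of_nonneg (by nlinarith [norm_nonneg b] : (0:ℝ) ≤ 1 - ‖b‖ ^ 2)]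
    rw [norm_div, habs, div_le_one (by nlinarith [norm_nonneg b])] at hSch
    simpa using hSch

theorem stmt_14 (ω : ℂ → ℂ) (c : ℕ → ℂ)
    (hω : AnalyticOn ℂ ω (Metric.ball 0 1))
    (h0 : ω 0 = 0)
    (hb : ∀ z ∈ Metric.ball (0 : ℂ) 1, ‖ω z‖ < 1)
    (hc : ∀ n, c n = iteratedDeriv n ω 0 / (n.factorial : ℂ))
    (him : (c 1).im = 0) (h1 : 0 ≤ (c 1).re) (h2 : (c 1).re ≤ 1) :
    ‖c 3‖ ≤ 1 - (c 1).re ^ 2 - ‖c 2‖ ^ 2 / (1 + (c 1).re) := by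
  have h0mem : (0:ℂ) ∈ ball (0:ℂ) 1 := mem_ball_self one_pos
  have hωd : DifferentiableOn ℂ ω (ball 0 1) :=
    (isOpen_ball.analyticOn_iff_analyticOnNhd.mp hω).differentiableOn
  set g := dslope ω 0 with hgdef
  have hgd : DifferentiableOn ℂ g (ball 0 1) :=
    (differentiableOn_dslope (isOpen_ball.mem_nhds h0mem)).mpr hωd
  have hgA : AnalyticOnNhd ℂ g (ball 0 1) := hgd.analyticOnNhd isOpen_ball
  have hmapsω : MapsTo ω (ball 0 1) (ball (ω 0) 1) := by
    intro z hz; rw [h0, mem_ball_zero_iff]; exact hb z hz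
  have hgle : ∀ z ∈ ball (0:ℂ) 1, ‖g z‖ ≤ 1 := by
    intro z hz
    have := Complex.norm_dslope_le_div_of_mapsTo_ball hωd (hmapsω.mono_right ball_subset_closedBall) hz
    rwa [div_one] at this
  have hωzg : ∀ z, ω z = z * g z := by
    intro z
    have h' := sub_smul_dslope ω 0 z
    rw [sub_zero, h0, sub_zero, smul_eq_mul] at h'
    exact h'.symm
  have hc1 : c 1 = g 0 := by
    rw [hc 1, iteratedDeriv_one, hgdef, dslope_same]
    norm_num
  have hkey := key_iterated hgA hωzg
  have hc2 : c 2 = deriv g 0 := by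
    rw [hc 2, hkey.1]
    norm_num [Nat.factorial]
  have hc3 : iteratedDeriv 2 g 0 = 2 * c 3 := by
    rw [hc 3, hkey.2]
    norm_num [Nat.factorial]
    ring
  set A := (c 1).re with hA
  have hc1C : c 1 = (A : ℂ) := by
    apply Complex.ext
    · simp [hA]
    · simp [him]
  have habsc1 : ‖c 1‖ = A := by
    rw [hc1C, Complex.norm_real, Real.norm_eq_abs, _root_.abs_of_nonneg h1]
  rcases eq_or_lt_of_le h2 with hA1 | hA1
  · -- A = 1 : g is constant of modulus one
    have habs1 : ‖g 0‖ = 1 := by rw [← hc1, habsc1, ← hA1]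
    have hmax : IsMaxOn (norm ∘ g) (ball 0 1) 0 := by
      intro w hw
      simp only [Function.comp_apply, Set.mem_setOf_eq]
      rw [habs1]; exact hgle w hw
    have hEq := Complex.eqOn_of_isPreconnected_of_isMaxOn_norm
      (convex_ball (0:ℂ) 1).isPreconnected isOpen_ball hgd h0mem hmax
    have hder0 : ∀ z ∈ ball (0:ℂ) 1, deriv g z = 0 := by
      intro z hz
      have hev : g =ᶠ[nhds z] (fun _ => g 0) := by
        filter_upwards [isOpen_ball.mem_nhds hz] with x hx using hEq hx
      rw [hev.deriv_eq, deriv_const]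
    have hc2z : c 2 = 0 := by rw [hc2, hder0 0 h0mem]
    have hc3z : c 3 = 0 := by
      have hev2 : deriv g =ᶠ[nhds (0:ℂ)] (fun _ => (0:ℂ)) := by
        filter_upwards [isOpen_ball.mem_nhds h0mem] with x hx using hder0 x hx
      have : iteratedDeriv 2 g 0 = 0 := by
        rw [iteratedDeriv_succ, iteratedDeriv_one, hev2.deriv_eq, deriv_const]
      rw [this] at hc3
      have h2c3 : (2:ℂ) * c 3 = 0 := hc3.symm
      have := mul_eq_zero.mp h2c3
      rcases this with h' | h'
      · exact absurd h' two_ne_zero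
      · exact h'
    rw [hc2z, hc3z, hA1]
    norm_num
  · -- A < 1
    have hg0 : g 0 = (A : ℂ) := by rw [← hc1, hc1C]
    have habsA : ‖((A:ℝ) : ℂ)‖ < 1 := by
      rw [Complex.norm_real, Real.norm_eq_abs, _root_.abs_of_nonneg h1]; exact hA1
    have hglt : ∀ z ∈ ball (0:ℂ) 1, ‖g z‖ < 1 :=
      strict_lt_one hgd hgle (by rw [hg0]; exact habsA)
    set a : ℂ := ((A : ℝ) : ℂ) with hadef
    have hdenne : ∀ z ∈ ball (0:ℂ) 1, (1:ℂ) - a * g z ≠ 0 := by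
      intro z hz h'
      rw [sub_eq_zero] at h'
      have : ‖a * g z‖ < 1 := by
        rw [norm_mul, hadef, Complex.norm_real, Real.norm_eq_abs, _root_.abs_of_nonneg h1]
        nlinarith [norm_nonneg (g z), hglt z hz]
      rw [← h'] at this; simp at this
    set h : ℂ → ℂ := fun z => (g z - a) / (1 - a * g z) with hhdef
    have hhd : DifferentiableOn ℂ h (ball 0 1) := by
      apply DifferentiableOn.div
      · exact hgd.sub (differentiableOn_const a)
      · exact (differentiableOn_const 1).sub ((differentiableOn_const a).mul hgd)
      · exact hdenne
    have hh0 : h 0 = 0 := by simp [hhdef, hg0]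
    have hhlt : ∀ z ∈ ball (0:ℂ) 1, ‖h z‖ < 1 := by
      intro z hz
      have := mobius_lt a (g z) habsA (hglt z hz)
      rwa [Complex.conj_ofReal] at this
    set k := dslope h 0 with hkdef
    have hkd : DifferentiableOn ℂ k (ball 0 1) :=
      (differentiableOn_dslope (isOpen_ball.mem_nhds h0mem)).mpr hhd
    have hkA : AnalyticOnNhd ℂ k (ball 0 1) := hkd.analyticOnNhd isOpen_ball
    have hmapsh : MapsTo h (ball 0 1) (ball (h 0) 1) := by
      intro z hz; rw [hh0, mem_ball_zero_iff]; exact hhlt z hz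
    have hkle : ∀ z ∈ ball (0:ℂ) 1, ‖k z‖ ≤ 1 := by
      intro z hz
      have := Complex.norm_dslope_le_div_of_mapsTo_ball hhd (hmapsh.mono_right ball_subset_closedBall) hz
      rwa [div_one] at this
    have hhzk : ∀ z, h z = z * k z := by
      intro z
      have h' := sub_smul_dslope h 0 z
      rw [sub_zero, hh0, sub_zero, smul_eq_mul] at h'
      exact h'.symm
    have hkey2 := key_iterated hkA hhzk
    -- derivative computations
    have hs : (0:ℝ) < 1 - A^2 := by nlinarith
    have hane : (1:ℂ) - a^2 ≠ 0 := by
      have : (1:ℂ) - a^2 = (((1 - A^2 : ℝ)) : ℂ) := by push_cast [hadef]; ring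
      rw [this]
      exact_mod_cast Complex.ofReal_ne_zero.mpr (ne_of_gt hs)
    have hderivh : ∀ z ∈ ball (0:ℂ) 1,
        deriv h z = deriv g z * (1 - a^2) / (1 - a * g z)^2 := by
      intro z hz
      have hgz : DifferentiableAt ℂ g z := hgd.differentiableAt (isOpen_ball.mem_nhds hz)
      rw [hhdef]
      rw [deriv_fun_div (hgz.sub_const a)
        ((differentiableAt_const (1:ℂ)).fun_sub ((differentiableAt_const a).fun_mul hgz))
        (hdenne z hz)]
      rw [deriv_sub_const a, deriv_const_sub, deriv_const_mul _ hgz]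
      congr 1
      ring
    have hhd0 : deriv h 0 = c 2 / (1 - a^2) := by
      rw [hderivh 0 h0mem, hg0, ← hc2, show (1:ℂ) - a * a = 1 - a^2 from by ring]
      rw [div_eq_div_iff (pow_ne_zero 2 hane) hane]
      ring
    have hg'A : AnalyticOnNhd ℂ (deriv g) (ball 0 1) := hgA.deriv
    have hg''0 : deriv (deriv g) 0 = 2 * c 3 := by
      have : iteratedDeriv 2 g 0 = deriv (deriv g) 0 := by
        rw [iteratedDeriv_succ, iteratedDeriv_one]
      rw [← this, hc3]
    have hdd : deriv (deriv h) 0 = 2 * c 3 / (1 - a^2) + 2 * a * (c 2)^2 / (1 - a^2)^2 := by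
      have hev : deriv h =ᶠ[nhds (0:ℂ)] (fun z => deriv g z * (1 - a^2) / (1 - a * g z)^2) := by
        filter_upwards [isOpen_ball.mem_nhds h0mem] with x hx using hderivh x hx
      rw [hev.deriv_eq]
      have hg'0 : DifferentiableAt ℂ (deriv g) 0 :=
        (hg'A 0 h0mem).differentiableAt
      have hg0' : DifferentiableAt ℂ g 0 := hgd.differentiableAt (isOpen_ball.mem_nhds h0mem)
      have hdend : DifferentiableAt ℂ (fun z => ((1:ℂ) - a * g z)^2) 0 :=
        (((differentiableAt_const (1:ℂ)).fun_sub ((differentiableAt_const a).fun_mul hg0'))).fun_pow 2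
      have hden20 : ((1:ℂ) - a * g 0)^2 ≠ 0 := pow_ne_zero 2 (hdenne 0 h0mem)
      rw [deriv_fun_div (hg'0.mul_const _) hdend hden20]
      rw [deriv_mul_const hg'0]
      rw [deriv_fun_pow (((differentiableAt_const (1:ℂ)).fun_sub ((differentiableAt_const a).fun_mul hg0'))) _]
      rw [deriv_const_sub, deriv_const_mul _ hg0']
      rw [hg0, ← hc2, hg''0]
      have h1aa : (1:ℂ) - a * a = 1 - a^2 := by ring
      rw [h1aa]
      field_simp
      ring
    have hk0 : k 0 = c 2 / (1 - a^2) := by rw [hkdef, dslope_same, hhd0]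
    have hk'0 : deriv k 0 = c 3 / (1 - a^2) + a * (c 2)^2 / (1 - a^2)^2 := by
      have h2h : iteratedDeriv 2 h 0 = deriv (deriv h) 0 := by
        rw [iteratedDeriv_succ, iteratedDeriv_one]
      have := hkey2.1
      rw [h2h, hdd] at this
      linear_combination -this / 2
    -- Schwarz-Pick for k
    have hSP := schwarz_pick_zero hkd hkle
    rw [hk'0, hk0] at hSP
    -- convert to real inequalities
    set B := ‖c 2‖ with hB
    set C := ‖c 3‖ with hC
    have habs1a2 : ‖(1:ℂ) - a^2‖ = 1 - A^2 := by
      have : (1:ℂ) - a^2 = (((1 - A^2 : ℝ)) : ℂ) := by push_cast [hadef]; ring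
      rw [this, Complex.norm_real, Real.norm_eq_abs, _root_.abs_of_nonneg (le_of_lt hs)]
    have habsk0 : ‖c 2 / (1 - a^2)‖ = B / (1 - A^2) := by
      rw [norm_div, habs1a2]
    have habst : ‖a * (c 2)^2 / (1 - a^2)^2‖ = A * B^2 / (1 - A^2)^2 := by
      rw [norm_div, norm_mul, norm_pow, norm_pow, habs1a2, hadef, Complex.norm_real, Real.norm_eq_abs,
        _root_.abs_of_nonneg h1]
    have htri : C / (1 - A^2) ≤
        ‖c 3 / (1 - a^2) + a * (c 2)^2 / (1 - a^2)^2‖ + A * B^2 / (1 - A^2)^2 := by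
      have h' := norm_add_le (c 3 / (1 - a^2) + a * (c 2)^2 / (1 - a^2)^2)
        (-(a * (c 2)^2 / (1 - a^2)^2))
      simp only [add_neg_cancel_right, norm_neg] at h'
      rw [norm_div, habs1a2] at h'
      rw [habst] at h'
      exact h'
    rw [habsk0] at hSP
    have hfinal : C / (1 - A^2) ≤ 1 - (B / (1 - A^2))^2 + A * B^2 / (1 - A^2)^2 :=
      le_trans htri (by linarith)
    -- final real algebra
    have h1pA : (0:ℝ) < 1 + A := by linarith
    have hsne : (1 - A^2 : ℝ) ≠ 0 := ne_of_gt hs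
    rw [div_le_iff₀ hs] at hfinal
    have heq : (1 - (B / (1 - A^2))^2 + A * B^2 / (1 - A^2)^2) * (1 - A^2)
        = 1 - A^2 - (1 - A) * B^2 / (1 - A^2) := by
      field_simp
      ring
    rw [heq] at hfinal
    have heq2 : (1 - A) * B^2 / (1 - A^2) = B^2 / (1 + A) := by
      rw [show (1 - A^2 : ℝ) = (1 - A) * (1 + A) by ring]
      rw [mul_div_mul_left _ _ (by linarith : (1 - A : ℝ) ≠ 0)]
    rw [heq2] at hfinal
    exact hfinal
end
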